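/- Let A be a nonnegative square matrix and π an equitable partition of its index set (i.e., every block A[X_i : X_j] of A with respect to π has constant row sums). Then the spectral radius of A equals the spectral radius of the left quotient matrix Q_l(A) = Λ^{-1} S^T A S, where S is the characteristic matrix of π and Λ = S^T S. -/

import Mathlib

/-- The spectral radius of a real matrix: the largest modulus of a (complex) eigenvalue. -/
noncomputable def specRad {m : Type*} [Fintype m] [DecidableEq m] (A : Matrix m m ℝ) : ℝ :=
  sSup (Set.image (fun z : ℂ => ‖z‖) (spectrum ℂ (A.map (fun r => (r : ℂ)))))

/-- The cell of the partition classified by `c` with label `q`. -/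
def cell {V Q : Type*} [Fintype V] [DecidableEq Q] (c : V → Q) (q : Q) : Finset V :=
  Finset.univ.filter (fun z => c z = q)

/-- The left quotient matrix `Λ⁻¹ Sᵀ A S` of `A` with respect to the partition classified
by `c`. -/
noncomputable def quotMat {V Q : Type*} [Fintype V] [DecidableEq Q]
    (A : Matrix V V ℝ) (c : V → Q) : Matrix Q Q ℝ :=
  fun q q' => ((cell c q).card : ℝ)⁻¹ * ∑ x ∈ cell c q, ∑ y ∈ cell c q', A x y

/-- The partition classified by `c` is equitable for `A`: each block has constant row sums. -/
def IsEquitable {V Q : Type*} [Fintype V] [DecidableEq Q] (A : Matrix V V ℝ) (c : V → Q) :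
    Prop :=
  ∀ (q : Q) (x y : V), c x = c y → ∑ z ∈ cell c q, A x z = ∑ z ∈ cell c q, A y z

attribute [local instance] Matrix.linftyOpNormedRing Matrix.linftyOpNormedAlgebra

open Finset in
/-- For an equitable partition, the quotient matrix entry `(c x, q')` is the row sum of `A`
over the cell `q'`, for any representative `x`. -/
lemma quotMat_apply_eq {n m : ℕ} (A : Matrix (Fin n) (Fin n) ℝ) (c : Fin n → Fin m)
    (heq : IsEquitable A c) (x : Fin n) (q' : Fin m) :
    quotMat A c (c x) q' = ∑ y ∈ cell c q', A x y := by
  have hx : x ∈ cell c (c x) := by simp [cell]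
  have hcard : (0 : ℝ) < ((cell c (c x)).card : ℝ) := by
    exact_mod_cast Finset.card_pos.mpr ⟨x, hx⟩
  have hsum : ∑ z ∈ cell c (c x), ∑ y ∈ cell c q', A z y
      = ((cell c (c x)).card : ℝ) * ∑ y ∈ cell c q', A x y := by
    rw [Finset.sum_congr rfl (fun z hz => heq q' z x (by simpa [cell] using hz))]
    rw [Finset.sum_const, nsmul_eq_mul]
  rw [quotMat, hsum]
  field_simp

open Finset in
/-- Row sums of powers of `A` are matched by row sums of powers of the quotient. -/
lemma rowsum_pow {n m : ℕ} (A : Matrix (Fin n) (Fin n) ℝ) (c : Fin n → Fin m)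
    (heq : IsEquitable A c) (k : ℕ) (x : Fin n) :
    ∑ j, (A ^ k) x j = ∑ q, ((quotMat A c) ^ k) (c x) q := by
  induction k generalizing x with
  | zero => simp [Matrix.one_apply]
  | succ k ih =>
    rw [pow_succ', pow_succ']
    have h1 : ∑ j, (A * A ^ k) x j = ∑ z, A x z * ∑ q, ((quotMat A c) ^ k) (c z) q := by
      simp only [Matrix.mul_apply]
      rw [Finset.sum_comm]
      exact Finset.sum_congr rfl fun z _ => by rw [← Finset.mul_sum, ih z]
    rw [h1, ← Finset.sum_fiberwise Finset.univ c (fun z => A x z * ∑ q, ((quotMat A c) ^ k) (c z) q)]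
    have h2 : ∀ q' : Fin m,
        ∑ z ∈ Finset.univ.filter (fun z => c z = q'), (A x z * ∑ q, ((quotMat A c) ^ k) (c z) q)
        = quotMat A c (c x) q' * ∑ q, ((quotMat A c) ^ k) q' q := by
      intro q'
      rw [quotMat_apply_eq A c heq x q', Finset.sum_mul]
      refine Finset.sum_congr rfl fun z hz => ?_
      have : c z = q' := (Finset.mem_filter.mp hz).2
      rw [this]
    calc ∑ q' : Fin m, ∑ z ∈ Finset.univ.filter (fun z => c z = q'),
            (A x z * ∑ q, ((quotMat A c) ^ k) (c z) q)
        = ∑ q' : Fin m, quotMat A c (c x) q' * ∑ q, ((quotMat A c) ^ k) q' q :=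
          Finset.sum_congr rfl fun q' _ => h2 q'
      _ = ∑ q, (quotMat A c * (quotMat A c) ^ k) (c x) q := by
          simp only [Matrix.mul_apply, Finset.mul_sum]
          rw [Finset.sum_comm]

lemma pow_entry_nonneg {n : ℕ} (A : Matrix (Fin n) (Fin n) ℝ) (h0 : ∀ i j, 0 ≤ A i j)
    (k : ℕ) (i j : Fin n) : 0 ≤ (A ^ k) i j := by
  induction k generalizing i j with
  | zero => simp [Matrix.one_apply]; positivity
  | succ k ih =>
    rw [pow_succ, Matrix.mul_apply]
    exact Finset.sum_nonneg fun z _ => mul_nonneg (ih i z) (h0 z j)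

lemma quotMat_entry_nonneg {n m : ℕ} (A : Matrix (Fin n) (Fin n) ℝ) (h0 : ∀ i j, 0 ≤ A i j)
    (c : Fin n → Fin m) (q q' : Fin m) : 0 ≤ quotMat A c q q' := by
  unfold quotMat
  have : (0:ℝ) ≤ ∑ x ∈ cell c q, ∑ y ∈ cell c q', A x y :=
    Finset.sum_nonneg fun x _ => Finset.sum_nonneg fun y _ => h0 x y
  positivity

/-- The linfty operator `nnnorm` of the complexification of a nonnegative real matrix equals
the sup of row sums (as a real, comparing through real coercion). -/
lemma nnnorm_map_eq_sup {k : ℕ} (M : Matrix (Fin k) (Fin k) ℝ) :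
    ‖M.map (fun r => (r : ℂ))‖₊ = Finset.univ.sup fun i => ∑ j, ‖M i j‖₊ := by
  rw [Matrix.linfty_opNNNorm_def]
  refine Finset.sup_congr rfl fun i _ => Finset.sum_congr rfl fun j _ => ?_
  simp [Matrix.map_apply]

/-- If the spectral radius (as extended nonneg real) of the complexification of `M` is
at most that of `N`, and both index types are nonempty, then `specRad M ≤ specRad N`. -/
lemma specRad_le_of_spectralRadius_le {a b : ℕ} (ha : 0 < a) (hb : 0 < b)
    (M : Matrix (Fin a) (Fin a) ℝ) (N : Matrix (Fin b) (Fin b) ℝ)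
    (h : spectralRadius ℂ (M.map (fun r => (r : ℂ)))
        ≤ spectralRadius ℂ (N.map (fun r => (r : ℂ)))) :
    specRad M ≤ specRad N := by
  haveI : Nonempty (Fin a) := ⟨⟨0, ha⟩⟩
  haveI : Nonempty (Fin b) := ⟨⟨0, hb⟩⟩
  set M' := M.map (fun r => (r : ℂ))
  set N' := N.map (fun r => (r : ℂ))
  obtain ⟨z, hz, hzr⟩ := spectrum.exists_nnnorm_eq_spectralRadius N'
  have hMne : (spectrum ℂ M').Nonempty := spectrum.nonempty M'
  have hbdd : BddAbove (Set.image (fun z : ℂ => ‖z‖) (spectrum ℂ N')) :=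
    ((spectrum.isCompact N').image continuous_norm).bddAbove
  refine csSup_le (hMne.image _) ?_
  rintro x ⟨lam, hlam, rfl⟩
  have h1 : (‖lam‖₊ : ENNReal) ≤ (‖z‖₊ : ENNReal) := by
    calc (‖lam‖₊ : ENNReal) ≤ spectralRadius ℂ M' :=
          le_iSup₂ (f := fun k (_ : k ∈ spectrum ℂ M') => (‖k‖₊ : ENNReal)) lam hlam
      _ ≤ spectralRadius ℂ N' := h
      _ = ‖z‖₊ := hzr.symm
  have h2 : ‖lam‖ ≤ ‖z‖ := by
    have := ENNReal.coe_le_coe.mp h1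
    simpa [← coe_nnnorm] using NNReal.coe_le_coe.mpr this
  exact h2.trans (le_csSup hbdd ⟨z, hz, rfl⟩)

open Finset in
theorem stmt5 {n m : ℕ} (A : Matrix (Fin n) (Fin n) ℝ) (h0 : ∀ i j, 0 ≤ A i j)
    (c : Fin n → Fin m) (hsurj : Function.Surjective c) (heq : IsEquitable A c) :
    specRad A = specRad (quotMat A c) := by
  rcases Nat.eq_zero_or_pos n with hn | hn
  · -- degenerate case: `n = 0` forces `m = 0` and both spectra are empty
    subst hn
    have hm : m = 0 := by
      by_contra hm
      obtain ⟨x, -⟩ := hsurj ⟨0, Nat.pos_of_ne_zero hm⟩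
      exact x.elim0
    subst hm
    haveI : Subsingleton (Matrix (Fin 0) (Fin 0) ℂ) :=
      ⟨fun M N => by ext i j; exact i.elim0⟩
    have hspec : ∀ (M : Matrix (Fin 0) (Fin 0) ℂ), spectrum ℂ M = ∅ := by
      intro M
      ext z
      simp [spectrum.mem_iff, isUnit_of_subsingleton]
    simp [specRad, hspec, Real.sSup_empty]
  · have hm : 0 < m := (c ⟨0, hn⟩).pos
    set B := quotMat A c with hB
    -- nonnegativity of powers
    have hBnn : ∀ i j, 0 ≤ B i j := quotMat_entry_nonneg A h0 c
    -- equality of linfty norms of powers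
    have hnorm : ∀ k : ℕ, ‖(A.map (fun r => (r : ℂ))) ^ k‖₊ = ‖(B.map (fun r => (r : ℂ))) ^ k‖₊ := by
      intro k
      have hA' : (A.map (fun r => (r : ℂ))) ^ k = (A ^ k).map (fun r => (r : ℂ)) := by
        exact
          (map_pow (Complex.ofRealHom.mapMatrix (m := Fin n)) A k).symm
      have hB' : (B.map (fun r => (r : ℂ))) ^ k = (B ^ k).map (fun r => (r : ℂ)) := by
        exact
          (map_pow (Complex.ofRealHom.mapMatrix (m := Fin m)) B k).symm
      rw [hA', hB', nnnorm_map_eq_sup, nnnorm_map_eq_sup]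
      -- row sums coincide (as `ℝ≥0`, via nonnegativity)
      have key : ∀ i : Fin n, (∑ j, ‖(A ^ k) i j‖₊) = ∑ q, ‖(B ^ k) (c i) q‖₊ := by
        intro i
        apply NNReal.coe_injective
        push_cast
        calc (∑ j, ‖(A ^ k) i j‖) = ∑ j, (A ^ k) i j := by
              refine Finset.sum_congr rfl fun j _ => ?_
              rw [Real.norm_eq_abs, abs_of_nonneg (pow_entry_nonneg A h0 k i j)]
          _ = ∑ q, (B ^ k) (c i) q := rowsum_pow A c heq k i
          _ = ∑ q, ‖(B ^ k) (c i) q‖ := by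
              refine Finset.sum_congr rfl fun q _ => ?_
              rw [Real.norm_eq_abs, abs_of_nonneg
                (pow_entry_nonneg B hBnn k (c i) q)]
      have himg : (Finset.univ : Finset (Fin n)).image c = Finset.univ :=
        Finset.image_univ_of_surjective hsurj
      calc (Finset.univ.sup fun i => ∑ j, ‖(A ^ k) i j‖₊)
          = Finset.univ.sup fun i => ∑ q, ‖(B ^ k) (c i) q‖₊ := by
            exact Finset.sup_congr rfl fun i _ => key i
        _ = (Finset.univ.image c).sup fun q => ∑ q', ‖(B ^ k) q q'‖₊ := by
            rw [Finset.sup_image]; rfl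
        _ = Finset.univ.sup fun q => ∑ q', ‖(B ^ k) q q'‖₊ := by rw [himg]
    -- Gelfand's formula gives equality of spectral radii
    have hrad : spectralRadius ℂ (A.map (fun r => (r : ℂ)))
        = spectralRadius ℂ (B.map (fun r => (r : ℂ))) := by
      refine tendsto_nhds_unique
        (spectrum.pow_nnnorm_pow_one_div_tendsto_nhds_spectralRadius (A.map (fun r => (r : ℂ))))
        ?_
      have : (fun k : ℕ => ((‖(A.map (fun r => (r : ℂ))) ^ k‖₊ : ENNReal)) ^ (1 / (k : ℝ)))
          = fun k : ℕ => ((‖(B.map (fun r => (r : ℂ))) ^ k‖₊ : ENNReal)) ^ (1 / (k : ℝ)) := by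
        funext k; rw [hnorm k]
      rw [this]
      exact spectrum.pow_nnnorm_pow_one_div_tendsto_nhds_spectralRadius _
    exact le_antisymm
      (specRad_le_of_spectralRadius_le hn hm A B hrad.le)
      (specRad_le_of_spectralRadius_le hm hn B A hrad.ge)
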